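/- Let r < 3/2 and let w be the solution of the Cauchy problem w'' + (y/2)·w' + (r − 1/2)·w = 0 for y > 0, with w(0) = 0 and w'(0) = 1. Then: w(y) > 0 for all y > 0; w'(y)/w(y) → 0 as y → +∞; and there exists a constant C > 0 such that w(y)/y^k → C as y → +∞, where k = 1 − 2r. -/

import Mathlib

open Real Filter Set Topology

noncomputable section

/-- `w` solves the Cauchy problem `w'' + (y/2) w' + (r - 1/2) w = 0` on `(0,∞)`,
with `w(0) = 0` and `w'(0) = 1`. -/
def SolvesLinODE (w : ℝ → ℝ) (r : ℝ) : Prop :=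
  (∀ y : ℝ, DifferentiableAt ℝ w y ∧ DifferentiableAt ℝ (deriv w) y) ∧
  (∀ y : ℝ, 0 < y →
    deriv (deriv w) y + (y / 2) * deriv w y + (r - 1 / 2) * w y = 0) ∧
  w 0 = 0 ∧ deriv w 0 = 1

lemma monoOn_of_hasDeriv {φ φ' : ℝ → ℝ} {Y : ℝ}
    (h : ∀ y ∈ Set.Ici Y, HasDerivAt φ (φ' y) y)
    (h0 : ∀ y ∈ Set.Ioi Y, 0 ≤ φ' y) : MonotoneOn φ (Set.Ici Y) := by
  apply monotoneOn_of_deriv_nonneg (convex_Ici Y)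
  · exact fun y hy => (h y hy).continuousAt.continuousWithinAt
  · intro y hy
    rw [interior_Ici] at hy
    exact ((h y (Set.Ioi_subset_Ici_self hy)).differentiableAt).differentiableWithinAt
  · intro y hy
    rw [interior_Ici] at hy
    rw [(h y (Set.Ioi_subset_Ici_self hy)).deriv]
    exact h0 y hy

lemma antiOn_of_hasDeriv {φ φ' : ℝ → ℝ} {Y : ℝ}
    (h : ∀ y ∈ Set.Ici Y, HasDerivAt φ (φ' y) y)
    (h0 : ∀ y ∈ Set.Ioi Y, φ' y ≤ 0) : AntitoneOn φ (Set.Ici Y) := by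
  apply antitoneOn_of_deriv_nonpos (convex_Ici Y)
  · exact fun y hy => (h y hy).continuousAt.continuousWithinAt
  · intro y hy
    rw [interior_Ici] at hy
    exact ((h y (Set.Ioi_subset_Ici_self hy)).differentiableAt).differentiableWithinAt
  · intro y hy
    rw [interior_Ici] at hy
    rw [(h y (Set.Ioi_subset_Ici_self hy)).deriv]
    exact h0 y hy

lemma eventually_pos_right {f : ℝ → ℝ} {d a : ℝ} (hf : HasDerivAt f d a) (hd : 0 < d)
    (h0 : f a = 0) : ∀ᶠ y in nhdsWithin a (Set.Ioi a), 0 < f y := by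
  have ht := hasDerivAt_iff_tendsto_slope.1 hf
  have h1 : ∀ᶠ y in nhdsWithin a {a}ᶜ, 0 < slope f a y := ht.eventually (eventually_gt_nhds hd)
  have h2 : nhdsWithin a (Set.Ioi a) ≤ nhdsWithin a {a}ᶜ :=
    nhdsWithin_mono a (fun x hx => ne_of_gt hx)
  filter_upwards [h2 h1, self_mem_nhdsWithin] with y hs hy
  rw [slope_def_field, h0, sub_zero] at hs
  have hya : 0 < y - a := sub_pos.2 hy
  have := mul_pos hs hya
  rwa [div_mul_cancel₀] at this
  exact ne_of_gt hya

lemma eventually_neg_left {f : ℝ → ℝ} {d a : ℝ} (hf : HasDerivAt f d a) (hd : 0 < d)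
    (h0 : f a = 0) : ∀ᶠ y in nhdsWithin a (Set.Iio a), f y < 0 := by
  have ht := hasDerivAt_iff_tendsto_slope.1 hf
  have h1 : ∀ᶠ y in nhdsWithin a {a}ᶜ, 0 < slope f a y := ht.eventually (eventually_gt_nhds hd)
  have h2 : nhdsWithin a (Set.Iio a) ≤ nhdsWithin a {a}ᶜ :=
    nhdsWithin_mono a (fun x hx => ne_of_lt hx)
  filter_upwards [h2 h1, self_mem_nhdsWithin] with y hs hy
  rw [slope_def_field, h0, sub_zero] at hs
  have hya : y - a < 0 := sub_neg.2 hy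
  rcases div_pos_iff.1 hs with ⟨h, h'⟩ | ⟨h, h'⟩
  · linarith
  · exact h

lemma hasDerivAt_rp {y : ℝ} (hy : 0 < y) (p : ℝ) :
    HasDerivAt (fun t : ℝ => t ^ p) (p * y ^ (p - 1)) y :=
  Real.hasDerivAt_rpow_const (Or.inl hy.ne')

lemma rp_succ {y : ℝ} (hy : 0 < y) (p : ℝ) : y ^ (p + 1) = y ^ p * y := by
  rw [Real.rpow_add_one hy.ne']

lemma rp_mul {y : ℝ} (hy : 0 < y) (a b : ℝ) : y ^ a * y ^ b = y ^ (a+b) :=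
  (Real.rpow_add hy a b).symm

lemma hasDerivAt_expq (y : ℝ) :
    HasDerivAt (fun t : ℝ => Real.exp (t^2/4)) (y/2 * Real.exp (y^2/4)) y := by
  have h1 : HasDerivAt (fun t : ℝ => t^2/4) (y/2) y := by
    have := (hasDerivAt_pow 2 y).div_const 4
    refine this.congr_deriv ?_
    ring
  have := h1.exp
  convert this using 1
  ring

lemma hasDerivAt_expnq (y : ℝ) :
    HasDerivAt (fun t : ℝ => Real.exp (-(t^2)/4)) (-(y/2) * Real.exp (-(y^2)/4)) y := by
  have h1 : HasDerivAt (fun t : ℝ => -(t^2)/4) (-(y/2)) y := by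
    have := ((hasDerivAt_pow 2 y).neg).div_const 4
    refine this.congr_deriv ?_
    ring
  have := h1.exp
  convert this using 1
  ring

lemma hasDerivAt_qrp {y : ℝ} (hy : 0 < y) (s : ℝ) :
    HasDerivAt (fun t : ℝ => Real.exp (t^2/4) * t ^ s)
      (Real.exp (y^2/4) * y ^ (s-1) * (y^2/2 + s)) y := by
  have := (hasDerivAt_expq y).mul (hasDerivAt_rp hy s)
  refine this.congr_deriv ?_
  have e1 : y ^ s = y ^ (s-1) * y := by
    rw [show s = (s-1) + 1 by ring, rp_succ hy]; ring_nf
  rw [e1]; ring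

lemma hasDerivAt_nqrp {y : ℝ} (hy : 0 < y) (s : ℝ) :
    HasDerivAt (fun t : ℝ => Real.exp (-(t^2)/4) * t ^ s)
      (Real.exp (-(y^2)/4) * y ^ (s-1) * (-(y^2)/2 + s)) y := by
  have := (hasDerivAt_expnq y).mul (hasDerivAt_rp hy s)
  refine this.congr_deriv ?_
  have e1 : y ^ s = y ^ (s-1) * y := by
    rw [show s = (s-1) + 1 by ring, rp_succ hy]; ring_nf
  rw [e1]; ring

lemma tendsto_exp_neg_rpow (s : ℝ) :
    Tendsto (fun y : ℝ => Real.exp (-(y^2)/4) * y ^ s) atTop (𝓝 0) := by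
  have hg : Tendsto (fun y : ℝ => Real.exp (-(y^2)/8)) atTop (𝓝 0) := by
    apply Real.tendsto_exp_atBot.comp
    have h1 : Tendsto (fun y : ℝ => y^2) atTop atTop := tendsto_pow_atTop two_ne_zero
    exact (tendsto_neg_atBot_iff.2 h1).atBot_div_const (by norm_num)
  apply squeeze_zero' (g := fun y : ℝ => Real.exp (-(y^2)/8))
  · filter_upwards [eventually_ge_atTop (1:ℝ)] with y hy
    positivity
  · filter_upwards [eventually_ge_atTop (1:ℝ), eventually_ge_atTop (8*|s|)] with y hy1 hy2
    have hy0 : 0 < y := by linarith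
    rw [Real.rpow_def_of_pos hy0, ← Real.exp_add]
    apply Real.exp_le_exp.2
    have hlog : Real.log y ≤ y := by
      have := Real.log_le_sub_one_of_pos hy0
      linarith
    have h1 : s * Real.log y ≤ |s| * y := by
      calc s * Real.log y ≤ |s * Real.log y| := le_abs_self _
        _ = |s| * |Real.log y| := abs_mul _ _
        _ ≤ |s| * y := by
            apply mul_le_mul_of_nonneg_left _ (abs_nonneg s)
            rw [abs_le]
            constructor
            · have := Real.log_nonneg hy1; linarith
            · exact hlog
    have h2 : |s| * y ≤ y^2/8 := by nlinarith [abs_nonneg s]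
    linarith
  · exact hg

def ODEk (w : ℝ → ℝ) (k : ℝ) : Prop :=
  (∀ y, DifferentiableAt ℝ w y) ∧ (∀ y, DifferentiableAt ℝ (deriv w) y) ∧
  (∀ y, 0 < y → deriv (deriv w) y = -(y/2) * deriv w y + (k/2) * w y)

def Ef (w : ℝ → ℝ) : ℝ → ℝ := fun y => y * deriv w y - (1 - y^2/2) * w y
def Jf (w : ℝ → ℝ) (k : ℝ) : ℝ → ℝ := fun y => y ^ k * deriv w y - k * y ^ (k-1) * w y
def Gf (w : ℝ → ℝ) (k : ℝ) : ℝ → ℝ := fun y => Real.exp (y^2/4) * Jf w k y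
def Hf (w : ℝ → ℝ) (k : ℝ) : ℝ → ℝ := fun y => w y / y ^ k
def DHf (w : ℝ → ℝ) (k : ℝ) : ℝ → ℝ := fun y => y ^ (-(2*k)) * Jf w k y

lemma hasDerivAt_Ef {w : ℝ → ℝ} {k : ℝ} (h : ODEk w k) {y : ℝ} (hy : 0 < y) :
    HasDerivAt (Ef w) ((k+2)/2 * (y * w y)) y := by
  obtain ⟨hd1, hd2, hode⟩ := h
  have h1 : HasDerivAt (fun t => t * deriv w t) (1 * deriv w y + y * deriv (deriv w) y) y :=
    (hasDerivAt_id y).mul (hd2 y).hasDerivAt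
  have h2 : HasDerivAt (fun t : ℝ => 1 - t^2/2) (-(2*y^1/2)) y := by
    exact ((hasDerivAt_const y (1:ℝ)).sub ((hasDerivAt_pow 2 y).div_const 2)).congr_deriv (by norm_num)
  have h3 := (h2.mul (hd1 y).hasDerivAt)
  have := h1.sub h3
  refine this.congr_deriv ?_
  rw [hode y hy]
  ring

lemma hasDerivAt_Gf {w : ℝ → ℝ} {k : ℝ} (h : ODEk w k) {y : ℝ} (hy : 0 < y) :
    HasDerivAt (Gf w k) (k * (1-k) * Real.exp (y^2/4) * y ^ (k-2) * w y) y := by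
  obtain ⟨hd1, hd2, hode⟩ := h
  have h1 : HasDerivAt (fun t => t ^ k * deriv w t)
      (k * y ^ (k-1) * deriv w y + y ^ k * deriv (deriv w) y) y :=
    (hasDerivAt_rp hy k).mul (hd2 y).hasDerivAt
  have h2 := ((hasDerivAt_rp hy (k-1)).const_mul k).mul (hd1 y).hasDerivAt
  have := (hasDerivAt_expq y).mul (h1.sub h2)
  refine this.congr_deriv ?_
  rw [hode y hy]
  have e1 : y ^ (k-1) = y ^ (k-2) * y := by
    rw [show k - 1 = (k-2) + 1 by ring, rp_succ hy]
  have e2 : y ^ k = y ^ (k-2) * y * y := by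
    rw [show k = (k-2) + 1 + 1 by ring, rp_succ hy, rp_succ hy]; ring_nf
  have e3 : (k - 1 - 1) = k - 2 := by ring
  rw [e3]
  simp only [Jf, Gf, e1, e2, Pi.sub_apply, Pi.mul_apply]
  ring

lemma hasDerivAt_Hf {w : ℝ → ℝ} {k : ℝ} (h : ODEk w k) {y : ℝ} (hy : 0 < y) :
    HasDerivAt (Hf w k) (DHf w k y) y := by
  obtain ⟨hd1, hd2, hode⟩ := h
  have h1 : HasDerivAt (fun t => w t * t ^ (-k)) (deriv w y * y ^ (-k) + w y * (-k * y ^ (-k-1))) y :=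
    (hd1 y).hasDerivAt.mul (hasDerivAt_rp hy (-k))
  have heq : ∀ t ∈ Set.Ioi (0:ℝ), w t * t ^ (-k) = Hf w k t := by
    intro t ht
    rw [Hf, Real.rpow_neg (le_of_lt ht), div_eq_mul_inv]
  have h2 : HasDerivAt (Hf w k) (deriv w y * y ^ (-k) + w y * (-k * y ^ (-k-1))) y := by
    refine h1.congr_of_eventuallyEq ?_
    filter_upwards [Ioi_mem_nhds hy] with t ht
    exact (heq t ht).symm
  convert h2 using 1
  rw [DHf, Jf]
  have e1 : y ^ (-(2*k)) * y ^ k = y ^ (-k) := by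
    rw [← Real.rpow_add hy]; ring_nf
  have e2 : y ^ (-(2*k)) * y ^ (k-1) = y ^ (-k-1) := by
    rw [← Real.rpow_add hy]; ring_nf
  calc y ^ (-(2*k)) * (y ^ k * deriv w y - k * y ^ (k-1) * w y)
      = (y ^ (-(2*k)) * y ^ k) * deriv w y - k * (y ^ (-(2*k)) * y ^ (k-1)) * w y := by ring
    _ = _ := by rw [e1, e2]; ring

lemma DHf_eq {w : ℝ → ℝ} {k : ℝ} {y : ℝ} (hy : 0 < y) :
    DHf w k y = Real.exp (-(y^2)/4) * y ^ (-(2*k)) * Gf w k y := by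
  have hee : Real.exp (-(y^2)/4) * Real.exp (y^2/4) = 1 := by
    rw [← Real.exp_add, show -(y^2)/4 + y^2/4 = 0 by ring, Real.exp_zero]
  rw [DHf, Gf]
  calc y ^ (-(2*k)) * Jf w k y
      = (Real.exp (-(y^2)/4) * Real.exp (y^2/4)) * (y ^ (-(2*k)) * Jf w k y) := by
        rw [hee]; ring
    _ = _ := by ring

lemma cont_w {w : ℝ → ℝ} {k : ℝ} (h : ODEk w k) : Continuous w :=
  continuous_iff_continuousAt.2 fun y => (h.1 y).continuousAt

lemma cont_dw {w : ℝ → ℝ} {k : ℝ} (h : ODEk w k) : Continuous (deriv w) :=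
  continuous_iff_continuousAt.2 fun y => (h.2.1 y).continuousAt

lemma cont_Ef {w : ℝ → ℝ} {k : ℝ} (h : ODEk w k) : Continuous (Ef w) := by
  apply Continuous.sub
  · exact continuous_id.mul (cont_dw h)
  · exact (Continuous.sub continuous_const ((continuous_pow 2).div_const 2)).mul (cont_w h)

lemma Ef_zero {w : ℝ → ℝ} (h0 : w 0 = 0) : Ef w 0 = 0 := by
  simp [Ef, h0]

lemma Ef_strict {w : ℝ → ℝ} {k : ℝ} (h : ODEk w k) (hk : -2 < k) (h0 : w 0 = 0) {b : ℝ} (hb : 0 < b)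
    (hpos : ∀ y, 0 < y → y < b → 0 < w y) : 0 < Ef w b := by
  have hs : StrictMonoOn (Ef w) (Set.Icc 0 b) := by
    apply strictMonoOn_of_deriv_pos (convex_Icc 0 b) ((cont_Ef h).continuousOn)
    intro y hy
    rw [interior_Icc] at hy
    rw [(hasDerivAt_Ef h hy.1).deriv]
    have : 0 < (k+2)/2 := by linarith
    exact mul_pos this (mul_pos hy.1 (hpos y hy.1 hy.2))
  have := hs (Set.left_mem_Icc.2 hb.le) (Set.right_mem_Icc.2 hb.le) hb
  rwa [Ef_zero h0] at this

lemma w_pos {w : ℝ → ℝ} {k : ℝ} (h : ODEk w k) (hk : -2 < k)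
    (h0 : w 0 = 0) (h1 : deriv w 0 = 1) : ∀ y, 0 < y → 0 < w y := by
  by_contra hcon
  push_neg at hcon
  obtain ⟨y1, hy1, hw1⟩ := hcon
  have hD0 : HasDerivAt w 1 0 := h1 ▸ (h.1 0).hasDerivAt
  have near0 := eventually_pos_right hD0 one_pos h0
  obtain ⟨ε, hε, hIoo⟩ := mem_nhdsGT_iff_exists_Ioo_subset.1 near0
  rw [Set.mem_Ioi] at hε
  have hεy1 : ε ≤ y1 := by
    by_contra hlt
    push_neg at hlt
    exact absurd (hIoo ⟨hy1, hlt⟩) (not_lt.2 hw1)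
  set S : Set ℝ := Set.Icc (ε/2) y1 ∩ {y | w y ≤ 0} with hS
  have hSclosed : IsClosed S := isClosed_Icc.inter (isClosed_le (cont_w h) continuous_const)
  have hSne : S.Nonempty := ⟨y1, ⟨by linarith, le_refl _⟩, hw1⟩
  have hSbdd : BddBelow S := ⟨ε/2, fun x hx => hx.1.1⟩
  set y0 := sInf S with hy0def
  have hy0S : y0 ∈ S := hSclosed.csInf_mem hSne hSbdd
  have hy0pos : 0 < y0 := lt_of_lt_of_le (by linarith) hy0S.1.1
  have hy0le : y0 ≤ y1 := hy0S.1.2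
  have hwy0 : w y0 ≤ 0 := hy0S.2
  have hpos : ∀ y, 0 < y → y < y0 → 0 < w y := by
    intro y hy hyy0
    rcases lt_or_ge y ε with hc | hc
    · exact hIoo ⟨hy, hc⟩
    · by_contra hneg
      push_neg at hneg
      have : y ∈ S := ⟨⟨by linarith, by linarith⟩, hneg⟩
      exact absurd (csInf_le hSbdd this) (not_le.2 hyy0)
  have hwy0' : w y0 = 0 := by
    refine le_antisymm hwy0 ?_
    have htend : Tendsto w (nhdsWithin y0 (Set.Iio y0)) (nhds (w y0)) :=
      ((cont_w h).tendsto y0).mono_left nhdsWithin_le_nhds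
    refine ge_of_tendsto htend ?_
    filter_upwards [Ioo_mem_nhdsLT_of_mem (Set.mem_Ioc.2 ⟨hy0pos, le_refl _⟩)] with y hy
    exact (hpos y hy.1 hy.2).le
  have hE : 0 < Ef w y0 := Ef_strict h hk h0 hy0pos hpos
  have hdw : 0 < deriv w y0 := by
    have : Ef w y0 = y0 * deriv w y0 := by
      rw [Ef, hwy0']; ring
    rw [this] at hE
    nlinarith
  have hneg := eventually_neg_left ((h.1 y0).hasDerivAt) hdw hwy0'
  have hposev : ∀ᶠ y in nhdsWithin y0 (Set.Iio y0), 0 < w y := by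
    filter_upwards [Ioo_mem_nhdsLT_of_mem (Set.mem_Ioc.2 ⟨hy0pos, le_refl _⟩)] with y hy
    exact hpos y hy.1 hy.2
  obtain ⟨y, hy1', hy2'⟩ := (hneg.and hposev).exists
  linarith

-- previously compiled pieces assumed:
-- Icc monotonicity helpers
lemma monoOn_of_hasDeriv_Icc {φ φ' : ℝ → ℝ} {a b : ℝ}
    (h : ∀ y ∈ Set.Icc a b, HasDerivAt φ (φ' y) y)
    (h0 : ∀ y ∈ Set.Ioo a b, 0 ≤ φ' y) : MonotoneOn φ (Set.Icc a b) := by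
  apply monotoneOn_of_deriv_nonneg (convex_Icc a b)
  · exact fun y hy => (h y hy).continuousAt.continuousWithinAt
  · intro y hy
    rw [interior_Icc] at hy
    exact ((h y (Set.Ioo_subset_Icc_self hy)).differentiableAt).differentiableWithinAt
  · intro y hy
    rw [interior_Icc] at hy
    rw [(h y (Set.Ioo_subset_Icc_self hy)).deriv]
    exact h0 y hy

lemma antiOn_of_hasDeriv_Icc {φ φ' : ℝ → ℝ} {a b : ℝ}
    (h : ∀ y ∈ Set.Icc a b, HasDerivAt φ (φ' y) y)
    (h0 : ∀ y ∈ Set.Ioo a b, φ' y ≤ 0) : AntitoneOn φ (Set.Icc a b) := by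
  apply antitoneOn_of_deriv_nonpos (convex_Icc a b)
  · exact fun y hy => (h y hy).continuousAt.continuousWithinAt
  · intro y hy
    rw [interior_Icc] at hy
    exact ((h y (Set.Ioo_subset_Icc_self hy)).differentiableAt).differentiableWithinAt
  · intro y hy
    rw [interior_Icc] at hy
    rw [(h y (Set.Ioo_subset_Icc_self hy)).deriv]
    exact h0 y hy

lemma abs_bound_aux (k m : ℝ) : |2*k-3-m| ≤ 2*|k| + 3 + |m| := by
  rcases abs_cases k with ⟨h1, h2⟩ | ⟨h1, h2⟩ <;>
  rcases abs_cases m with ⟨h3, h4⟩ | ⟨h3, h4⟩ <;>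
  rcases abs_cases (2*k-3-m) with ⟨h5, h6⟩ | ⟨h5, h6⟩ <;> linarith

lemma abs_bound_aux2 (k : ℝ) : |(-2)*k-1| ≤ 2*|k| + 3 := by
  rcases abs_cases k with ⟨h1, h2⟩ | ⟨h1, h2⟩ <;>
  rcases abs_cases ((-2)*k-1) with ⟨h5, h6⟩ | ⟨h5, h6⟩ <;> linarith

/-- comparison function bound: for `T` large, `|Gf|` growth controlled. -/
lemma G_bound {w : ℝ → ℝ} {k : ℝ} (h : ODEk w k) (hwpos : ∀ y, 0 < y → 0 < w y)
    {c m Z W : ℝ} (hc : 0 ≤ c) (hZ : 1 ≤ Z)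
    (hH : ∀ y, Z ≤ y → y ≤ W → Hf w k y ≤ c * y ^ (-m)) :
    ∃ T, Z ≤ T ∧ T = max Z (2*|k| + |m| + 6) ∧ ∀ y, T ≤ y → y ≤ W →
      |Gf w k y| ≤ |Gf w k T| + (4*|k*(1-k)| * c) * (Real.exp (y^2/4) * y ^ (2*k-3-m)) := by
  set κa := |k*(1-k)| with hκa
  have hκa0 : 0 ≤ κa := abs_nonneg _
  set T := max Z (2*|k| + |m| + 6) with hT
  have hZT : Z ≤ T := le_max_left _ _
  have hT1 : 1 ≤ T := le_trans hZ hZT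
  have hTbig : 2*|k| + |m| + 6 ≤ T := le_max_right _ _
  refine ⟨T, hZT, rfl, ?_⟩
  -- the comparison function f
  set f : ℝ → ℝ := fun t => (4*κa*c) * (Real.exp (t^2/4) * t ^ (2*k-3-m)) with hf
  have hf' : ∀ t, 0 < t → HasDerivAt f
      ((4*κa*c) * (Real.exp (t^2/4) * t ^ (2*k-3-m-1) * (t^2/2 + (2*k-3-m)))) t :=
    fun t ht => (hasDerivAt_qrp ht (2*k-3-m)).const_mul _
  -- derivative bound: for t ≥ T, |G' t| ≤ f' t
  have hkey : ∀ t, T ≤ t → t ≤ W →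
      κa * Real.exp (t^2/4) * t ^ (k-2) * w t ≤
      (4*κa*c) * (Real.exp (t^2/4) * t ^ (2*k-3-m-1) * (t^2/2 + (2*k-3-m))) := by
    intro t ht htW
    have ht0 : 0 < t := lt_of_lt_of_le (by linarith [abs_nonneg k, abs_nonneg m]) (le_trans hTbig ht)
    have habs : |2*k-3-m| ≤ 2*|k| + 3 + |m| := abs_bound_aux k m
    have hts : t^2/4 ≥ |2*k-3-m| := by nlinarith [abs_nonneg k, abs_nonneg m]
    have h1 : t^2/4 ≤ t^2/2 + (2*k-3-m) := by
      have := neg_abs_le (2*k-3-m)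
      nlinarith
    -- w t = H t * t^k ≤ c t^{-m} t^k
    have hwt : w t ≤ c * t ^ (k-m) := by
      have hHt := hH t (le_trans hZT ht) htW
      have : w t = Hf w k t * t ^ k := by
        rw [Hf]
        field_simp
      rw [this]
      calc Hf w k t * t ^ k ≤ (c * t ^ (-m)) * t ^ k := by
            apply mul_le_mul_of_nonneg_right hHt (le_of_lt (Real.rpow_pos_of_pos ht0 k))
        _ = c * t ^ (k-m) := by rw [mul_assoc, rp_mul ht0]; ring_nf
    -- t^{k-2} * w ≤ c t^{2k-2-m} ; and RHS ≥ 4κa c e t^{2k-3-m-1} t²/4 = κa c e t^{2k-2-m}...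
    have e1 : t ^ (k-2) * (c * t ^ (k-m)) = c * t ^ (2*k-2-m) := by
      rw [mul_comm (t ^ (k-2)), mul_assoc, rp_mul ht0]
      ring_nf
    have e2 : t ^ (2*k-3-m-1) * (t^2) = t ^ (2*k-2-m) := by
      rw [show (t:ℝ)^2 = t^((2:ℝ)) by norm_num [Real.rpow_natCast], rp_mul ht0]
      ring_nf
    have hG'le : κa * Real.exp (t^2/4) * t ^ (k-2) * w t ≤ κa * c * Real.exp (t^2/4) * t ^ (2*k-2-m) := by
      have hwpos' := hwpos t ht0
      have := mul_le_mul_of_nonneg_left hwt (le_of_lt (Real.rpow_pos_of_pos ht0 (k-2)))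
      calc κa * Real.exp (t^2/4) * t ^ (k-2) * w t
          = (κa * Real.exp (t^2/4)) * (t ^ (k-2) * w t) := by ring
        _ ≤ (κa * Real.exp (t^2/4)) * (c * t ^ (2*k-2-m)) := by
            apply mul_le_mul_of_nonneg_left _ (by positivity)
            rw [← e1]
            exact this
        _ = κa * c * Real.exp (t^2/4) * t ^ (2*k-2-m) := by ring
    refine le_trans hG'le ?_
    have hrp : (0:ℝ) < t ^ (2*k-3-m-1) := Real.rpow_pos_of_pos ht0 _
    calc κa * c * Real.exp (t^2/4) * t ^ (2*k-2-m)
        = (4*κa*c) * (Real.exp (t^2/4) * (t ^ (2*k-3-m-1) * (t^2/4))) := by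
          rw [show t ^ (2*k-3-m-1) * (t^2/4) = (t ^ (2*k-3-m-1) * t^2)/4 by ring, e2]
          ring
      _ ≤ (4*κa*c) * (Real.exp (t^2/4) * (t ^ (2*k-3-m-1) * (t^2/2 + (2*k-3-m)))) := by
          apply mul_le_mul_of_nonneg_left _ (by positivity)
          apply mul_le_mul_of_nonneg_left _ (by positivity)
          exact mul_le_mul_of_nonneg_left h1 (le_of_lt hrp)
      _ = _ := by ring
  -- u = G - f antitone, v = G + f monotone on [T, y]
  intro y hy hyW
  have hG'abs : ∀ t, 0 < t → |k * (1-k) * Real.exp (t^2/4) * t ^ (k-2) * w t|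
      = κa * Real.exp (t^2/4) * t ^ (k-2) * w t := by
    intro t ht0
    rw [abs_mul, abs_mul, abs_mul]
    rw [abs_of_pos (hwpos t ht0), abs_of_pos (Real.exp_pos _), abs_of_pos (Real.rpow_pos_of_pos ht0 _)]
  have hu : AntitoneOn (fun t => Gf w k t - f t) (Set.Icc T y) := by
    apply antiOn_of_hasDeriv_Icc (φ' := fun t => k * (1-k) * Real.exp (t^2/4) * t ^ (k-2) * w t
        - (4*κa*c) * (Real.exp (t^2/4) * t ^ (2*k-3-m-1) * (t^2/2 + (2*k-3-m))))
    · intro t htm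
      have ht0 : 0 < t := lt_of_lt_of_le (by linarith [abs_nonneg k, abs_nonneg m]) (le_trans hTbig htm.1)
      exact (hasDerivAt_Gf h ht0).sub (hf' t ht0)
    · intro t htm
      have h2 := hkey t htm.1.le (le_trans htm.2.le hyW)
      have h3 : k * (1-k) * Real.exp (t^2/4) * t ^ (k-2) * w t
          ≤ κa * Real.exp (t^2/4) * t ^ (k-2) * w t := by
        have ht0 : 0 < t := lt_of_lt_of_le (by linarith [abs_nonneg k, abs_nonneg m]) (le_trans hTbig htm.1.le)
        rw [← hG'abs t ht0]
        exact le_abs_self _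
      linarith
  have hv : MonotoneOn (fun t => Gf w k t + f t) (Set.Icc T y) := by
    apply monoOn_of_hasDeriv_Icc (φ' := fun t => k * (1-k) * Real.exp (t^2/4) * t ^ (k-2) * w t
        + (4*κa*c) * (Real.exp (t^2/4) * t ^ (2*k-3-m-1) * (t^2/2 + (2*k-3-m))))
    · intro t htm
      have ht0 : 0 < t := lt_of_lt_of_le (by linarith [abs_nonneg k, abs_nonneg m]) (le_trans hTbig htm.1)
      exact (hasDerivAt_Gf h ht0).add (hf' t ht0)
    · intro t htm
      have h2 := hkey t htm.1.le (le_trans htm.2.le hyW)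
      have ht0 : 0 < t := lt_of_lt_of_le (by linarith [abs_nonneg k, abs_nonneg m]) (le_trans hTbig htm.1.le)
      have h3 : -(κa * Real.exp (t^2/4) * t ^ (k-2) * w t)
          ≤ k * (1-k) * Real.exp (t^2/4) * t ^ (k-2) * w t := by
        rw [← hG'abs t ht0]
        exact neg_abs_le _
      linarith
  have hTy : T ∈ Set.Icc T y := ⟨le_refl _, hy⟩
  have hyy : y ∈ Set.Icc T y := ⟨hy, le_refl _⟩
  have hu2 := hu hTy hyy hy
  have hv2 := hv hTy hyy hy
  simp only at hu2 hv2
  have hfT : 0 ≤ f T := by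
    have hT0 : (0:ℝ) < T := by linarith
    have : (0:ℝ) < T ^ (2*k-3-m) := Real.rpow_pos_of_pos hT0 _
    positivity
  have hfy : f y = 4*κa*c * (Real.exp (y^2/4) * y ^ (2*k-3-m)) := rfl
  rw [hfy] at hu2 hv2
  rw [abs_le]
  constructor
  · linarith [neg_abs_le (Gf w k T)]
  · linarith [le_abs_self (Gf w k T)]

lemma H_pos {w : ℝ → ℝ} {k : ℝ} (hwpos : ∀ y, 0 < y → 0 < w y) {y : ℝ} (hy : 0 < y) :
    0 < Hf w k y :=
  div_pos (hwpos y hy) (Real.rpow_pos_of_pos hy k)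

lemma DH_bound {w : ℝ → ℝ} {k : ℝ} (h : ODEk w k) (hwpos : ∀ y, 0 < y → 0 < w y)
    {c m Z : ℝ} (hc : 0 ≤ c) (hZ : 1 ≤ Z)
    (hH : ∀ y, Z ≤ y → Hf w k y ≤ c * y ^ (-m)) :
    ∃ A, 0 ≤ A ∧ ∃ T, Z ≤ T ∧ ∀ y, T ≤ y →
      |DHf w k y| ≤ A * (Real.exp (-(y^2)/4) * y ^ (-(2*k)))
        + (4*|k*(1-k)| * c) * y ^ (-3-m) := by
  set T := max Z (2*|k| + |m| + 6) with hTdef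
  have hZT : Z ≤ T := le_max_left _ _
  refine ⟨|Gf w k T|, abs_nonneg _, T, hZT, ?_⟩
  intro y hy
  have hy0 : 0 < y := by
    have : (1:ℝ) ≤ y := le_trans (le_trans hZ hZT) hy
    linarith
  obtain ⟨T', hZT', hT'eq, hGb⟩ := G_bound (W := y) h hwpos hc hZ (fun t htZ _ => hH t htZ)
  rw [← hTdef] at hT'eq
  subst hT'eq
  have hGy := hGb y hy (le_refl y)
  have hpos1 : (0:ℝ) < Real.exp (-(y^2)/4) * y ^ (-(2*k)) := by
    have := Real.rpow_pos_of_pos hy0 (-(2*k))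
    positivity
  have habs : |DHf w k y| = Real.exp (-(y^2)/4) * y ^ (-(2*k)) * |Gf w k y| := by
    rw [DHf_eq hy0, abs_mul, abs_of_pos hpos1]
  rw [habs]
  have hexp : Real.exp (-(y^2)/4) * Real.exp (y^2/4) = 1 := by
    rw [← Real.exp_add, show -(y^2)/4 + y^2/4 = 0 by ring, Real.exp_zero]
  have hrp2 : y ^ (-(2*k)) * y ^ (2*k-3-m) = y ^ (-3-m) := by
    rw [rp_mul hy0]; ring_nf
  calc Real.exp (-(y^2)/4) * y ^ (-(2*k)) * |Gf w k y|
      ≤ Real.exp (-(y^2)/4) * y ^ (-(2*k)) *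
        (|Gf w k T| + (4*|k*(1-k)| * c) * (Real.exp (y^2/4) * y ^ (2*k-3-m))) :=
        mul_le_mul_of_nonneg_left hGy hpos1.le
    _ = |Gf w k T| * (Real.exp (-(y^2)/4) * y ^ (-(2*k)))
        + (4*|k*(1-k)| * c) * ((Real.exp (-(y^2)/4) * Real.exp (y^2/4)) * (y ^ (-(2*k)) * y ^ (2*k-3-m))) := by
        ring
    _ = _ := by rw [hexp, hrp2]; ring

lemma H_bdd_of_mono {w : ℝ → ℝ} {k : ℝ} (h : ODEk w k) (hwpos : ∀ y, 0 < y → 0 < w y)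
    {Y1 : ℝ} (hY1 : 1 ≤ Y1) (hmono : MonotoneOn (Hf w k) (Set.Ici Y1)) :
    ∃ M, 0 < M ∧ ∃ Z, Y1 ≤ Z ∧ ∀ y, Z ≤ y → Hf w k y ≤ M := by
  classical
  set κa := |k*(1-k)| with hκadef
  have hκa0 : 0 ≤ κa := abs_nonneg _
  set T := max Y1 (2*|k| + |(0:ℝ)| + 6) with hTdef
  have hY1T : Y1 ≤ T := le_max_left _ _
  have hT1 : 1 ≤ T := le_trans hY1 hY1T
  have hT0 : (0:ℝ) < T := by linarith
  set A : ℝ := |Gf w k T| with hAdef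
  -- step 1+2 : pointwise differential inequality
  have step2 : ∀ y, T ≤ y →
      DHf w k y ≤ A * (Real.exp (-(y^2)/4) * y ^ (-(2*k))) + (4*κa) * (Hf w k y) * y ^ (-(3:ℝ)) := by
    intro y hy
    have hy0 : 0 < y := lt_of_lt_of_le hT0 hy
    have hy1 : (1:ℝ) ≤ y := le_trans hT1 hy
    have hHy : 0 ≤ Hf w k y := (H_pos hwpos hy0).le
    obtain ⟨T', hZT', hT'eq, hGb⟩ := G_bound (W := y) (c := Hf w k y) (m := 0) h hwpos hHy hY1
      (fun t ht1 hty => by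
        have ht0 : 0 < t := by linarith
        rw [neg_zero, Real.rpow_zero, mul_one]
        rcases eq_or_lt_of_le hty with rfl | hlt
        · exact le_refl _
        · exact hmono (Set.mem_Ici.2 ht1) (Set.mem_Ici.2 (le_trans ht1 hty)) hty)
    rw [← hTdef] at hT'eq
    subst hT'eq
    have hGy := hGb y hy (le_refl y)
    have hpos1 : (0:ℝ) < Real.exp (-(y^2)/4) * y ^ (-(2*k)) := by
      have := Real.rpow_pos_of_pos hy0 (-(2*k))
      positivity
    have hDH : DHf w k y ≤ Real.exp (-(y^2)/4) * y ^ (-(2*k)) * |Gf w k y| := by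
      rw [DHf_eq hy0]
      exact mul_le_mul_of_nonneg_left (le_abs_self _) hpos1.le
    have hexp : Real.exp (-(y^2)/4) * Real.exp (y^2/4) = 1 := by
      rw [← Real.exp_add, show -(y^2)/4 + y^2/4 = 0 by ring, Real.exp_zero]
    have hrp2 : y ^ (-(2*k)) * y ^ (2*k-3-0) = y ^ (-(3:ℝ)) := by
      rw [rp_mul hy0]; ring_nf
    calc DHf w k y ≤ Real.exp (-(y^2)/4) * y ^ (-(2*k)) * |Gf w k y| := hDH
      _ ≤ Real.exp (-(y^2)/4) * y ^ (-(2*k)) *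
          (A + (4*κa * Hf w k y) * (Real.exp (y^2/4) * y ^ (2*k-3-0))) :=
          mul_le_mul_of_nonneg_left hGy hpos1.le
      _ = A * (Real.exp (-(y^2)/4) * y ^ (-(2*k)))
          + (4*κa * Hf w k y) * ((Real.exp (-(y^2)/4) * Real.exp (y^2/4)) * (y ^ (-(2*k)) * y ^ (2*k-3-0))) := by
          ring
      _ = _ := by rw [hexp, hrp2]; ring
  -- step 3 : K and its derivative
  set q : ℝ → ℝ := fun y => Real.exp (2*κa * y ^ (-(2:ℝ))) with hqdef
  have hq : ∀ y : ℝ, 0 < y → HasDerivAt q (q y * (2*κa * ((-2) * y ^ (-(2:ℝ)-1)))) y := by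
    intro y hy
    exact ((hasDerivAt_rp hy (-(2:ℝ))).const_mul (2*κa)).exp
  have hq1 : ∀ y : ℝ, 1 ≤ y → 1 ≤ q y ∧ q y ≤ Real.exp (2*κa) := by
    intro y hy
    have hy0 : (0:ℝ) < y := by linarith
    have h1 : (0:ℝ) ≤ y ^ (-(2:ℝ)) := (Real.rpow_pos_of_pos hy0 _).le
    have h2 : y ^ (-(2:ℝ)) ≤ 1 := Real.rpow_le_one_of_one_le_of_nonpos hy (by norm_num)
    constructor
    · exact Real.one_le_exp (by positivity)
    · exact Real.exp_le_exp.2 (by nlinarith)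
  set A₂ : ℝ := Real.exp (2*κa) * A with hA₂def
  have hA₂0 : 0 ≤ A₂ := by positivity
  set K : ℝ → ℝ := fun y => Hf w k y * q y with hKdef
  have hK : ∀ y : ℝ, 0 < y → HasDerivAt K
      (DHf w k y * q y + Hf w k y * (q y * (2*κa * ((-2) * y ^ (-(2:ℝ)-1))))) y := by
    intro y hy
    exact (hasDerivAt_Hf h hy).mul (hq y hy)
  have hK' : ∀ y, T ≤ y → DHf w k y * q y + Hf w k y * (q y * (2*κa * ((-2) * y ^ (-(2:ℝ)-1))))
      ≤ A₂ * (Real.exp (-(y^2)/4) * y ^ (-(2*k))) := by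
    intro y hy
    have hy0 : 0 < y := lt_of_lt_of_le hT0 hy
    have hy1 : (1:ℝ) ≤ y := le_trans hT1 hy
    obtain ⟨hq1a, hq1b⟩ := hq1 y hy1
    have hq0 : 0 < q y := lt_of_lt_of_le one_pos hq1a
    have e3 : y ^ (-(2:ℝ)-1) = y ^ (-(3:ℝ)) := by norm_num
    have hs2 := step2 y hy
    have hHy : 0 ≤ Hf w k y := (H_pos hwpos hy0).le
    have hcomb : DHf w k y + Hf w k y * (2*κa * ((-2) * y ^ (-(2:ℝ)-1)))
        ≤ A * (Real.exp (-(y^2)/4) * y ^ (-(2*k))) := by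
      rw [e3]
      have : Hf w k y * (2*κa * ((-2) * y ^ (-(3:ℝ)))) = -((4*κa) * Hf w k y * y ^ (-(3:ℝ))) := by ring
      rw [this]
      linarith
    have hposq : (0:ℝ) ≤ Real.exp (-(y^2)/4) * y ^ (-(2*k)) := by
      have := Real.rpow_pos_of_pos hy0 (-(2*k))
      positivity
    calc DHf w k y * q y + Hf w k y * (q y * (2*κa * ((-2) * y ^ (-(2:ℝ)-1))))
        = (DHf w k y + Hf w k y * (2*κa * ((-2) * y ^ (-(2:ℝ)-1)))) * q y := by ring
      _ ≤ (A * (Real.exp (-(y^2)/4) * y ^ (-(2*k)))) * q y := by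
          exact mul_le_mul_of_nonneg_right hcomb hq0.le
      _ ≤ (A * (Real.exp (-(y^2)/4) * y ^ (-(2*k)))) * Real.exp (2*κa) := by
          apply mul_le_mul_of_nonneg_left hq1b (by positivity)
      _ = A₂ * (Real.exp (-(y^2)/4) * y ^ (-(2*k))) := by rw [hA₂def]; ring
  -- step 4 : σ₂ and its derivative bound
  set σ₂ : ℝ → ℝ := fun y => (4*A₂) * (Real.exp (-(y^2)/4) * y ^ (-2*k-1)) with hσdef
  have hσ : ∀ y : ℝ, 0 < y → HasDerivAt σ₂
      ((4*A₂) * (Real.exp (-(y^2)/4) * y ^ (-2*k-1-1) * (-(y^2)/2 + (-2*k-1)))) y := by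
    intro y hy
    exact (hasDerivAt_nqrp hy (-2*k-1)).const_mul _
  set T2 := max T (2*|k| + 6) with hT2def
  have hTT2 : T ≤ T2 := le_max_left _ _
  have hT2big : 2*|k| + 6 ≤ T2 := le_max_right _ _
  have hT20 : (0:ℝ) < T2 := lt_of_lt_of_le hT0 hTT2
  have hσ' : ∀ y, T2 ≤ y →
      (4*A₂) * (Real.exp (-(y^2)/4) * y ^ (-2*k-1-1) * (-(y^2)/2 + (-2*k-1)))
      ≤ -(A₂ * (Real.exp (-(y^2)/4) * y ^ (-(2*k)))) := by
    intro y hy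
    have hy0 : 0 < y := lt_of_lt_of_le hT20 hy
    have habs : |(-2)*k-1| ≤ 2*|k| + 3 := abs_bound_aux2 k
    have hyk : 2*|k| + 6 ≤ y := le_trans hT2big hy
    have h1 : -(y^2)/2 + (-2*k-1) ≤ -(y^2)/4 := by
      have h2 : -(2*k) - 1 ≤ |(-2)*k-1| := by
        have := le_abs_self ((-2)*k-1)
        linarith
      nlinarith [abs_nonneg k]
    have e4 : y ^ (-2*k-1-1) * y^2 = y ^ (-(2*k)) := by
      rw [show (y:ℝ)^2 = y^((2:ℝ)) by norm_num [Real.rpow_natCast], rp_mul hy0]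
      ring_nf
    have hrp : (0:ℝ) < y ^ (-2*k-1-1) := Real.rpow_pos_of_pos hy0 _
    calc (4*A₂) * (Real.exp (-(y^2)/4) * y ^ (-2*k-1-1) * (-(y^2)/2 + (-2*k-1)))
        ≤ (4*A₂) * (Real.exp (-(y^2)/4) * y ^ (-2*k-1-1) * (-(y^2)/4)) := by
          apply mul_le_mul_of_nonneg_left _ (by positivity)
          apply mul_le_mul_of_nonneg_left h1 (by positivity)
      _ = -(A₂ * (Real.exp (-(y^2)/4) * (y ^ (-2*k-1-1) * y^2))) := by ring
      _ = _ := by rw [e4]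
  -- step 5 : Φ antitone
  set Φ : ℝ → ℝ := fun y => K y + σ₂ y with hΦdef
  have hΦanti : AntitoneOn Φ (Set.Ici T2) := by
    apply antiOn_of_hasDeriv (φ' := fun y =>
      (DHf w k y * q y + Hf w k y * (q y * (2*κa * ((-2) * y ^ (-(2:ℝ)-1)))))
      + (4*A₂) * (Real.exp (-(y^2)/4) * y ^ (-2*k-1-1) * (-(y^2)/2 + (-2*k-1))))
    · intro y hy
      have hy0 : 0 < y := lt_of_lt_of_le hT20 hy
      exact (hK y hy0).add (hσ y hy0)
    · intro y hy
      have := hK' y (le_trans hTT2 hy.le)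
      have := hσ' y hy.le
      linarith
  -- step 6: conclude
  refine ⟨max (Φ T2) 1, lt_of_lt_of_le one_pos (le_max_right _ _), T2, le_trans hY1T hTT2, ?_⟩
  intro y hy
  have hy0 : 0 < y := lt_of_lt_of_le hT20 hy
  have hy1 : (1:ℝ) ≤ y := le_trans (le_trans hT1 hTT2) hy
  have hσpos : 0 ≤ σ₂ y := by
    have := Real.rpow_pos_of_pos hy0 (-2*k-1)
    positivity
  have hq1a := (hq1 y hy1).1
  have hHK : Hf w k y ≤ K y := by
    have hHy : 0 ≤ Hf w k y := (H_pos hwpos hy0).le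
    calc Hf w k y = Hf w k y * 1 := by ring
      _ ≤ Hf w k y * q y := mul_le_mul_of_nonneg_left hq1a hHy
  have := hΦanti (Set.mem_Ici.2 (le_refl T2)) (Set.mem_Ici.2 hy) hy
  have hΦy : K y + σ₂ y ≤ Φ T2 := this
  calc Hf w k y ≤ K y := hHK
    _ ≤ Φ T2 := by linarith
    _ ≤ max (Φ T2) 1 := le_max_left _ _

lemma H_eventually_monotone {w : ℝ → ℝ} {k : ℝ} (h : ODEk w k)
    (hwpos : ∀ y, 0 < y → 0 < w y) :
    ∃ Y1, 1 ≤ Y1 ∧ (MonotoneOn (Hf w k) (Set.Ici Y1) ∨ AntitoneOn (Hf w k) (Set.Ici Y1)) := by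
  have hDH : ∀ y : ℝ, 0 < y → DHf w k y = Real.exp (-(y^2)/4) * y ^ (-(2*k)) * Gf w k y :=
    fun y hy => DHf_eq hy
  have hHmono_of : ∀ Y1, 1 ≤ Y1 → (∀ y, Y1 ≤ y → 0 ≤ Gf w k y) →
      MonotoneOn (Hf w k) (Set.Ici Y1) := by
    intro Y1 hY1 hG
    apply monoOn_of_hasDeriv (φ' := DHf w k)
    · intro y hy
      exact hasDerivAt_Hf h (lt_of_lt_of_le (by linarith) hy)
    · intro y hy
      have hy0 : 0 < y := lt_of_lt_of_le (by linarith) hy.le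
      rw [hDH y hy0]
      have := Real.rpow_pos_of_pos hy0 (-(2*k))
      have := hG y hy.le
      positivity
  have hHanti_of : ∀ Y1, 1 ≤ Y1 → (∀ y, Y1 ≤ y → Gf w k y ≤ 0) →
      AntitoneOn (Hf w k) (Set.Ici Y1) := by
    intro Y1 hY1 hG
    apply antiOn_of_hasDeriv (φ' := DHf w k)
    · intro y hy
      exact hasDerivAt_Hf h (lt_of_lt_of_le (by linarith) hy)
    · intro y hy
      have hy0 : 0 < y := lt_of_lt_of_le (by linarith) hy.le
      rw [hDH y hy0]
      have h1 : (0:ℝ) < Real.exp (-(y^2)/4) * y ^ (-(2*k)) := by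
        have := Real.rpow_pos_of_pos hy0 (-(2*k))
        positivity
      exact mul_nonpos_of_nonneg_of_nonpos h1.le (hG y hy.le)
  rcases le_or_gt 0 (k * (1-k)) with hκ | hκ
  · -- G monotone on Ici 1
    have hGmono : MonotoneOn (Gf w k) (Set.Ici 1) := by
      apply monoOn_of_hasDeriv (φ' := fun y => k * (1-k) * Real.exp (y^2/4) * y ^ (k-2) * w y)
      · exact fun y hy => hasDerivAt_Gf h (lt_of_lt_of_le one_pos hy)
      · intro y hy
        have hy0 : 0 < y := lt_of_lt_of_le one_pos hy.le
        have h1 := Real.rpow_pos_of_pos hy0 (k-2)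
        have h2 := hwpos y hy0
        have h3 := Real.exp_pos (y^2/4)
        positivity
    by_cases hex : ∃ y1, 1 ≤ y1 ∧ 0 < Gf w k y1
    · obtain ⟨y1, hy1, hGy1⟩ := hex
      refine ⟨y1, hy1, Or.inl (hHmono_of y1 hy1 ?_)⟩
      intro y hy
      exact le_trans hGy1.le (hGmono (Set.mem_Ici.2 hy1) (Set.mem_Ici.2 (le_trans hy1 hy)) hy)
    · push_neg at hex
      refine ⟨1, le_refl 1, Or.inr (hHanti_of 1 (le_refl 1) ?_)⟩
      intro y hy
      exact le_of_not_gt (fun hc => absurd hc (by simpa using hex y hy))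
  · -- G antitone on Ici 1
    have hGanti : AntitoneOn (Gf w k) (Set.Ici 1) := by
      apply antiOn_of_hasDeriv (φ' := fun y => k * (1-k) * Real.exp (y^2/4) * y ^ (k-2) * w y)
      · exact fun y hy => hasDerivAt_Gf h (lt_of_lt_of_le one_pos hy)
      · intro y hy
        have hy0 : 0 < y := lt_of_lt_of_le one_pos hy.le
        have h1 := Real.rpow_pos_of_pos hy0 (k-2)
        have h2 := hwpos y hy0
        have h3 := Real.exp_pos (y^2/4)
        have : k * (1-k) * (Real.exp (y^2/4) * (y ^ (k-2) * w y)) ≤ 0 :=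
          mul_nonpos_of_nonpos_of_nonneg hκ.le (by positivity)
        nlinarith [this]
    by_cases hex : ∃ y1, 1 ≤ y1 ∧ Gf w k y1 < 0
    · obtain ⟨y1, hy1, hGy1⟩ := hex
      refine ⟨y1, hy1, Or.inr (hHanti_of y1 hy1 ?_)⟩
      intro y hy
      exact le_trans (hGanti (Set.mem_Ici.2 hy1) (Set.mem_Ici.2 (le_trans hy1 hy)) hy) hGy1.le
    · push_neg at hex
      exact ⟨1, le_refl 1, Or.inl (hHmono_of 1 (le_refl 1) (fun y hy => hex y hy))⟩

lemma H_conv {w : ℝ → ℝ} {k : ℝ} (h : ODEk w k) (hwpos : ∀ y, 0 < y → 0 < w y) :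
    ∃ C, 0 ≤ C ∧ Tendsto (Hf w k) atTop (𝓝 C) ∧
      ∃ M, 0 < M ∧ ∃ Z, 1 ≤ Z ∧ ∀ y, Z ≤ y → Hf w k y ≤ M := by
  obtain ⟨Y1, hY1, hdi⟩ := H_eventually_monotone h hwpos
  have hY10 : (0:ℝ) < Y1 := by linarith
  rcases hdi with hmono | hanti
  · obtain ⟨M, hM, Z, hYZ, hZb⟩ := H_bdd_of_mono h hwpos hY1 hmono
    have hZ1 : (1:ℝ) ≤ Z := le_trans hY1 hYZ
    set f : ℝ → ℝ := fun y => Hf w k (max y Z) with hfdef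
    have hfmono : Monotone f := by
      intro a b hab
      exact hmono (Set.mem_Ici.2 (le_trans hYZ (le_max_right a Z)))
        (Set.mem_Ici.2 (le_trans hYZ (le_max_right b Z)))
        (max_le_max hab (le_refl Z))
    have hbdd : BddAbove (Set.range f) := by
      refine ⟨M, ?_⟩
      rintro x ⟨y, rfl⟩
      exact hZb (max y Z) (le_max_right y Z)
    have htf := tendsto_atTop_ciSup hfmono hbdd
    have heq : (fun y => Hf w k y) =ᶠ[atTop] f := by
      filter_upwards [eventually_ge_atTop Z] with y hy
      simp only [hfdef, max_eq_left hy]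
    refine ⟨⨆ y, f y, ?_, Tendsto.congr' heq.symm htf, M, hM, Z, hZ1, hZb⟩
    apply ge_of_tendsto htf
    filter_upwards [eventually_ge_atTop (1:ℝ)] with y hy
    exact (H_pos hwpos (lt_of_lt_of_le one_pos (le_trans hy (le_max_left y Z)))).le
  · set f : ℝ → ℝ := fun y => Hf w k (max y Y1) with hfdef
    have hfanti : Antitone f := by
      intro a b hab
      exact hanti (Set.mem_Ici.2 (le_max_right a Y1))
        (Set.mem_Ici.2 (le_max_right b Y1))
        (max_le_max hab (le_refl Y1))
    have hbdd : BddBelow (Set.range f) := by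
      refine ⟨0, ?_⟩
      rintro x ⟨y, rfl⟩
      exact (H_pos hwpos (lt_of_lt_of_le hY10 (le_max_right y Y1))).le
    have htf := tendsto_atTop_ciInf hfanti hbdd
    have heq : (fun y => Hf w k y) =ᶠ[atTop] f := by
      filter_upwards [eventually_ge_atTop Y1] with y hy
      simp only [hfdef, max_eq_left hy]
    refine ⟨⨅ y, f y, ?_, Tendsto.congr' heq.symm htf, max (Hf w k Y1) 1,
      lt_of_lt_of_le one_pos (le_max_right _ _), Y1, hY1, ?_⟩
    · apply ge_of_tendsto htf
      filter_upwards [eventually_ge_atTop (1:ℝ)] with y hy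
      exact (H_pos hwpos (lt_of_lt_of_le hY10 (le_max_right y Y1))).le
    · intro y hy
      calc Hf w k y ≤ Hf w k Y1 := hanti (Set.mem_Ici.2 (le_refl Y1)) (Set.mem_Ici.2 hy) hy
        _ ≤ max (Hf w k Y1) 1 := le_max_left _ _

lemma H_decay {w : ℝ → ℝ} {k : ℝ} (h : ODEk w k) (hwpos : ∀ y, 0 < y → 0 < w y)
    (hlim0 : Tendsto (Hf w k) atTop (𝓝 0))
    {M Z0 : ℝ} (hM : 0 < M) (hZ0 : 1 ≤ Z0) (hMb : ∀ y, Z0 ≤ y → Hf w k y ≤ M) :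
    ∀ n : ℕ, ∃ c, 0 < c ∧ ∃ Z, 1 ≤ Z ∧ ∀ y, Z ≤ y → Hf w k y ≤ c * y ^ (-(2*(n:ℝ))) := by
  intro n
  induction n with
  | zero =>
    refine ⟨M, hM, Z0, hZ0, ?_⟩
    intro y hy
    have := hMb y hy
    have hy0 : (0:ℝ) < y := by linarith
    rw [show (-(2*((0:ℕ):ℝ))) = 0 by push_cast; ring, Real.rpow_zero, mul_one]
    exact this
  | succ n ih =>
    obtain ⟨c, hc, Z, hZ1, hcb⟩ := ih
    obtain ⟨A, hA0, T, hZT, hDHb⟩ := DH_bound (m := 2*(n:ℝ)) h hwpos hc.le hZ1 hcb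
    set m : ℝ := 2*(n:ℝ) with hmdef
    have hm0 : 0 ≤ m := by positivity
    have h2m : (0:ℝ) < 2 + m := by linarith
    set B : ℝ := 4*|k*(1-k)| * c with hBdef
    have hB0 : 0 ≤ B := by positivity
    set σ : ℝ → ℝ := fun y =>
      (4*A) * (Real.exp (-(y^2)/4) * y ^ (-2*k-1)) + (B/(2+m)) * y ^ (-2-m) with hσdef
    have hσd : ∀ y : ℝ, 0 < y → HasDerivAt σ
        ((4*A) * (Real.exp (-(y^2)/4) * y ^ (-2*k-1-1) * (-(y^2)/2 + (-2*k-1)))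
          + (B/(2+m)) * ((-2-m) * y ^ (-2-m-1))) y := by
      intro y hy
      exact ((hasDerivAt_nqrp hy _).const_mul _).add ((hasDerivAt_rp hy _).const_mul _)
    set T3 := max T (2*|k| + 6) with hT3def
    have hTT3 : T ≤ T3 := le_max_left _ _
    have hT3big : 2*|k| + 6 ≤ T3 := le_max_right _ _
    have hT30 : (0:ℝ) < T3 := lt_of_lt_of_le (by positivity) hT3big
    have hT31 : (1:ℝ) ≤ T3 := by
      have := abs_nonneg k
      linarith
    have hσ' : ∀ y, T3 ≤ y →
        ((4*A) * (Real.exp (-(y^2)/4) * y ^ (-2*k-1-1) * (-(y^2)/2 + (-2*k-1)))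
          + (B/(2+m)) * ((-2-m) * y ^ (-2-m-1)))
        ≤ -(A * (Real.exp (-(y^2)/4) * y ^ (-(2*k))) + B * y ^ (-3-m)) := by
      intro y hy
      have hy0 : 0 < y := lt_of_lt_of_le hT30 hy
      have habs : |(-2)*k-1| ≤ 2*|k| + 3 := abs_bound_aux2 k
      have hyk : 2*|k| + 6 ≤ y := le_trans hT3big hy
      have h1 : -(y^2)/2 + (-2*k-1) ≤ -(y^2)/4 := by
        have h2 : -(2*k) - 1 ≤ |(-2)*k-1| := by
          have := le_abs_self ((-2)*k-1)
          linarith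
        nlinarith [abs_nonneg k]
      have e4 : y ^ (-2*k-1-1) * y^2 = y ^ (-(2*k)) := by
        rw [show (y:ℝ)^2 = y^((2:ℝ)) by norm_num [Real.rpow_natCast], rp_mul hy0]
        ring_nf
      have part1 : (4*A) * (Real.exp (-(y^2)/4) * y ^ (-2*k-1-1) * (-(y^2)/2 + (-2*k-1)))
          ≤ -(A * (Real.exp (-(y^2)/4) * y ^ (-(2*k)))) := by
        have hrp : (0:ℝ) < y ^ (-2*k-1-1) := Real.rpow_pos_of_pos hy0 _
        calc (4*A) * (Real.exp (-(y^2)/4) * y ^ (-2*k-1-1) * (-(y^2)/2 + (-2*k-1)))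
            ≤ (4*A) * (Real.exp (-(y^2)/4) * y ^ (-2*k-1-1) * (-(y^2)/4)) := by
              apply mul_le_mul_of_nonneg_left _ (by positivity)
              apply mul_le_mul_of_nonneg_left h1 (by positivity)
          _ = -(A * (Real.exp (-(y^2)/4) * (y ^ (-2*k-1-1) * y^2))) := by ring
          _ = _ := by rw [e4]
      have part2 : (B/(2+m)) * ((-2-m) * y ^ (-2-m-1)) = -(B * y ^ (-3-m)) := by
        rw [show (-2-m-1 : ℝ) = -3-m by ring]
        field_simp
        ring
      linarith
    have hΨmono : MonotoneOn (fun y => Hf w k y - σ y) (Set.Ici T3) := by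
      apply monoOn_of_hasDeriv (φ' := fun y => DHf w k y -
        ((4*A) * (Real.exp (-(y^2)/4) * y ^ (-2*k-1-1) * (-(y^2)/2 + (-2*k-1)))
          + (B/(2+m)) * ((-2-m) * y ^ (-2-m-1))))
      · intro y hy
        have hy0 : 0 < y := lt_of_lt_of_le hT30 hy
        exact (hasDerivAt_Hf h hy0).sub (hσd y hy0)
      · intro y hy
        have h1 := hσ' y hy.le
        have h2 := hDHb y (le_trans hTT3 hy.le)
        have h3 := neg_abs_le (DHf w k y)
        linarith
    have htendσ : Tendsto σ atTop (𝓝 0) := by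
      have t1 : Tendsto (fun y : ℝ => (4*A) * (Real.exp (-(y^2)/4) * y ^ (-2*k-1))) atTop (𝓝 ((4*A) * 0)) :=
        (tendsto_exp_neg_rpow (-2*k-1)).const_mul _
      have t2 : Tendsto (fun y : ℝ => (B/(2+m)) * y ^ (-2-m)) atTop (𝓝 ((B/(2+m)) * 0)) := by
        apply Tendsto.const_mul
        rw [show (-2-m : ℝ) = -(2+m) by ring]
        exact tendsto_rpow_neg_atTop h2m
      have := t1.add t2
      rw [hσdef]
      simpa only [mul_zero, add_zero] using this
    have hle : ∀ y, T3 ≤ y → Hf w k y ≤ σ y := by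
      intro y hy
      have hΨy : Hf w k y - σ y ≤ 0 := by
        have htendΨ : Tendsto (fun z => Hf w k z - σ z) atTop (𝓝 (0 - 0)) := hlim0.sub htendσ
        rw [sub_zero] at htendΨ
        apply ge_of_tendsto htendΨ
        filter_upwards [eventually_ge_atTop y] with z hz
        exact hΨmono (Set.mem_Ici.2 hy) (Set.mem_Ici.2 (le_trans hy hz)) hz
      linarith
    -- convert σ bound to clean power bound
    have hev : ∀ᶠ y in atTop, (4*A) * (Real.exp (-(y^2)/4) * y ^ (-2*k-1+(2+m))) ≤ 1 := by
      have := (tendsto_exp_neg_rpow (-2*k-1+(2+m))).const_mul (4*A)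
      rw [mul_zero] at this
      exact this.eventually (eventually_le_nhds one_pos)
    obtain ⟨Z4, hZ4⟩ := eventually_atTop.1 hev
    refine ⟨1 + B/(2+m), by positivity, max (max T3 Z4) 1, le_max_right _ _, ?_⟩
    intro y hy
    have hyT3 : T3 ≤ y := le_trans (le_trans (le_max_left _ _) (le_max_left _ _)) hy
    have hyZ4 : Z4 ≤ y := le_trans (le_trans (le_max_right _ _) (le_max_left _ _)) hy
    have hy0 : 0 < y := lt_of_lt_of_le hT30 hyT3
    have hterm1 : (4*A) * (Real.exp (-(y^2)/4) * y ^ (-2*k-1)) ≤ y ^ (-2-m) := by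
      have hsplit : y ^ (-2*k-1 : ℝ) = y ^ (-2*k-1+(2+m)) * y ^ (-2-m) := by
        rw [rp_mul hy0]
        ring_nf
      have h4 := hZ4 y hyZ4
      have hrp0 : (0:ℝ) ≤ y ^ (-2-m) := (Real.rpow_pos_of_pos hy0 _).le
      calc (4*A) * (Real.exp (-(y^2)/4) * y ^ (-2*k-1))
          = ((4*A) * (Real.exp (-(y^2)/4) * y ^ (-2*k-1+(2+m)))) * y ^ (-2-m) := by
            rw [hsplit]; ring
        _ ≤ 1 * y ^ (-2-m) := mul_le_mul_of_nonneg_right h4 hrp0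
        _ = y ^ (-2-m) := one_mul _
    have hexp : (-(2*(((n+1):ℕ):ℝ))) = -2-m := by push_cast; ring
    rw [hexp]
    have := hle y hyT3
    have hσy : σ y ≤ (1 + B/(2+m)) * y ^ (-2-m) := by
      have hfact : (1 + B/(2+m)) * y ^ (-2-m) = y ^ (-2-m) + (B/(2+m)) * y ^ (-2-m) := by ring
      simp only [hσdef]
      rw [hfact]
      exact add_le_add hterm1 (le_refl _)
    exact le_trans this hσy

lemma w_lower {w : ℝ → ℝ} {k : ℝ} (h : ODEk w k) (hk : -2 < k) (h0 : w 0 = 0)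
    (hwpos : ∀ y, 0 < y → 0 < w y) :
    ∃ δ, 0 < δ ∧ ∃ Z, 1 ≤ Z ∧ ∀ y, Z ≤ y → δ * y ^ (-(2:ℝ)) ≤ w y := by
  set δ := Ef w 1 with hδdef
  have hδ : 0 < δ := Ef_strict h hk h0 one_pos (fun y hy _ => hwpos y hy)
  have hEge : ∀ y, 1 ≤ y → δ ≤ Ef w y := by
    intro y hy
    have hEm : MonotoneOn (Ef w) (Set.Ici 1) := by
      apply monoOn_of_hasDeriv (φ' := fun y => (k+2)/2 * (y * w y))
      · exact fun y hy => hasDerivAt_Ef h (lt_of_lt_of_le one_pos hy)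
      · intro y hy
        have hy0 : 0 < y := lt_of_lt_of_le one_pos hy.le
        have := hwpos y hy0
        have : 0 < (k+2)/2 := by linarith
        positivity
    exact hEm (Set.mem_Ici.2 (le_refl 1)) (Set.mem_Ici.2 hy) hy
  -- the comparison function Φ
  set Φ : ℝ → ℝ := fun y => Real.exp (y^2/4) * w y * y⁻¹
    - (δ*2) * (Real.exp (y^2/4) * (y^3)⁻¹) with hΦdef
  have hΦd : ∀ y : ℝ, 0 < y → HasDerivAt Φ
      ((y/2 * Real.exp (y^2/4) * w y + Real.exp (y^2/4) * deriv w y) * y⁻¹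
        + (Real.exp (y^2/4) * w y) * (-(y^2)⁻¹)
        - (δ*2) * ((y/2 * Real.exp (y^2/4)) * (y^3)⁻¹
          + Real.exp (y^2/4) * (-(3*y^2) / ((y^3)^2)))) y := by
    intro y hy
    have p1 : HasDerivAt (fun t : ℝ => Real.exp (t^2/4) * w t)
        (y/2 * Real.exp (y^2/4) * w y + Real.exp (y^2/4) * deriv w y) y :=
      (hasDerivAt_expq y).mul (h.1 y).hasDerivAt
    have p2 : HasDerivAt (fun t : ℝ => t⁻¹) (-(y^2)⁻¹) y := by
      have := hasDerivAt_inv hy.ne'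
      convert this using 1 <;> try ring
    have p3 := p1.mul p2
    have p4 : HasDerivAt (fun t : ℝ => (t^3)⁻¹) (-(3*y^2) / ((y^3)^2)) y := by
      have := (hasDerivAt_pow 3 y).inv (pow_ne_zero 3 hy.ne')
      exact this.congr_deriv (by norm_num)
    have p5 := ((hasDerivAt_expq y).mul p4).const_mul (δ*2)
    have := p3.sub p5
    exact this.congr_deriv (by ring)
  have hΦmono : MonotoneOn Φ (Set.Ici 1) := by
    apply monoOn_of_hasDeriv (φ' := fun y =>
      (y/2 * Real.exp (y^2/4) * w y + Real.exp (y^2/4) * deriv w y) * y⁻¹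
        + (Real.exp (y^2/4) * w y) * (-(y^2)⁻¹)
        - (δ*2) * ((y/2 * Real.exp (y^2/4)) * (y^3)⁻¹
          + Real.exp (y^2/4) * (-(3*y^2) / ((y^3)^2))))
    · exact fun y hy => hΦd y (lt_of_lt_of_le one_pos hy)
    · intro y hy
      have hy0 : 0 < y := lt_of_lt_of_le one_pos hy.le
      have hid : (y/2 * Real.exp (y^2/4) * w y + Real.exp (y^2/4) * deriv w y) * y⁻¹
          + (Real.exp (y^2/4) * w y) * (-(y^2)⁻¹)
          - (δ*2) * ((y/2 * Real.exp (y^2/4)) * (y^3)⁻¹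
            + Real.exp (y^2/4) * (-(3*y^2) / ((y^3)^2)))
          = Real.exp (y^2/4) * ((Ef w y - δ)/y^2 + 6*δ/y^4) := by
        rw [Ef]
        field_simp
        ring
      rw [hid]
      have h1 : 0 ≤ Ef w y - δ := by linarith [hEge y hy.le]
      have h2 : (0:ℝ) < y^2 := by positivity
      have h3 : (0:ℝ) < y^4 := by positivity
      have := Real.exp_pos (y^2/4)
      positivity
  -- eventual threshold
  have hev : ∀ᶠ y in atTop, |Φ 1| * (Real.exp (-(y^2)/4) * y ^ (3:ℝ)) ≤ δ := by
    have := (tendsto_exp_neg_rpow 3).const_mul (|Φ 1|)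
    rw [mul_zero] at this
    exact this.eventually (eventually_le_nhds hδ)
  obtain ⟨Z4, hZ4⟩ := eventually_atTop.1 hev
  refine ⟨δ, hδ, max Z4 1, le_max_right _ _, ?_⟩
  intro y hy
  have hy1 : (1:ℝ) ≤ y := le_trans (le_max_right _ _) hy
  have hy0 : (0:ℝ) < y := by linarith
  have hΦy := hΦmono (Set.mem_Ici.2 (le_refl 1)) (Set.mem_Ici.2 hy1) hy1
  -- unpack: w y ≥ 2δ/y² + Φ 1 * y * e^{-y²/4}
  have hexp1 : Real.exp (y^2/4) * Real.exp (-(y^2)/4) = 1 := by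
    rw [← Real.exp_add, show y^2/4 + -(y^2)/4 = 0 by ring, Real.exp_zero]
  have hkey : Φ 1 * (y * Real.exp (-(y^2)/4)) + (δ*2) * (y^2)⁻¹ ≤ w y := by
    have hmul := mul_le_mul_of_nonneg_right hΦy
      (le_of_lt (mul_pos hy0 (Real.exp_pos (-(y^2)/4))))
    have e2 : (y^3)⁻¹ * y = (y^2)⁻¹ := by
      field_simp
    have hrw : Φ y * (y * Real.exp (-(y^2)/4))
        = w y - (δ*2) * (y^2)⁻¹ := by
      calc Φ y * (y * Real.exp (-(y^2)/4))
          = (Real.exp (y^2/4) * Real.exp (-(y^2)/4)) * (w y * (y⁻¹ * y))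
            - (δ*2) * ((Real.exp (y^2/4) * Real.exp (-(y^2)/4)) * ((y^3)⁻¹ * y)) := by
            simp only [hΦdef]; ring
        _ = w y - (δ*2) * (y^2)⁻¹ := by
            rw [hexp1, inv_mul_cancel₀ hy0.ne', e2]; ring
    rw [hrw] at hmul
    linarith
  have hterm : -(δ * (y^2)⁻¹) ≤ Φ 1 * (y * Real.exp (-(y^2)/4)) := by
    have h4 := hZ4 y (le_trans (le_max_left _ _) hy)
    have hrp3 : y ^ (3:ℝ) = y^3 := by
      rw [show (3:ℝ) = ((3:ℕ):ℝ) by norm_num, Real.rpow_natCast]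
    rw [hrp3] at h4
    have hstep : |Φ 1| * (y * Real.exp (-(y^2)/4)) ≤ δ * (y^2)⁻¹ := by
      have h5 := mul_le_mul_of_nonneg_right h4 (by positivity : (0:ℝ) ≤ (y^2)⁻¹)
      have e3 : y^3 * (y^2)⁻¹ = y := by
        field_simp
      calc |Φ 1| * (y * Real.exp (-(y^2)/4))
          = (|Φ 1| * (Real.exp (-(y^2)/4) * y^3)) * (y^2)⁻¹ := by
            rw [show |Φ 1| * (Real.exp (-(y^2)/4) * y^3) * (y^2)⁻¹
              = |Φ 1| * ((y^3 * (y^2)⁻¹) * Real.exp (-(y^2)/4)) by ring, e3]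
        _ ≤ δ * (y^2)⁻¹ := h5
    calc -(δ * (y^2)⁻¹) ≤ -(|Φ 1| * (y * Real.exp (-(y^2)/4))) := by linarith
      _ ≤ Φ 1 * (y * Real.exp (-(y^2)/4)) := by
          have := neg_abs_le (Φ 1)
          have hpos : (0:ℝ) ≤ y * Real.exp (-(y^2)/4) := by positivity
          nlinarith [mul_nonneg (by linarith : (0:ℝ) ≤ Φ 1 + |Φ 1|) hpos]
  have hfin : δ * (y^2)⁻¹ ≤ w y := by
    have h2δ : δ * (y^2)⁻¹ + δ * (y^2)⁻¹ = (δ*2) * (y^2)⁻¹ := by ring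
    linarith
  have : y ^ (-(2:ℝ)) = (y^2)⁻¹ := by
    rw [Real.rpow_neg hy0.le, show (2:ℝ) = ((2:ℕ):ℝ) by norm_num, Real.rpow_natCast]
  rw [this]
  exact hfin

lemma DHf_identity {w : ℝ → ℝ} {k : ℝ} {y : ℝ} (hy : 0 < y) (hw0 : w y ≠ 0) :
    DHf w k y = (deriv w y / w y - k * y⁻¹) * Hf w k y := by
  have hyk : (0:ℝ) < y ^ k := Real.rpow_pos_of_pos hy k
  have e1 : y ^ (-(2*k)) * y ^ k = (y ^ k)⁻¹ := by
    rw [rp_mul hy, show -(2*k) + k = -k by ring, Real.rpow_neg hy.le]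
  have e2 : y ^ (-(2*k)) * y ^ (k-1) = (y ^ k)⁻¹ * y⁻¹ := by
    rw [rp_mul hy, show -(2*k) + (k-1) = (-k) + (-1) by ring, ← rp_mul hy,
      Real.rpow_neg hy.le, Real.rpow_neg_one]
  have lhs_eq : DHf w k y = (y ^ k)⁻¹ * deriv w y - k * ((y ^ k)⁻¹ * y⁻¹) * w y := by
    rw [DHf, Jf]
    calc y ^ (-(2*k)) * (y ^ k * deriv w y - k * y ^ (k-1) * w y)
        = (y ^ (-(2*k)) * y ^ k) * deriv w y - k * (y ^ (-(2*k)) * y ^ (k-1)) * w y := by ring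
      _ = _ := by rw [e1, e2]
  rw [lhs_eq, Hf]
  field_simp

/-- Lemma 2.2 (ii): when `r < 3/2`, `w > 0` on `(0,∞)`, `w'/w → 0` at `+∞`, and
`w(y) ∼ C y^k` as `y → +∞` with `k = 1 - 2r`. -/
theorem ode_w_subcritical (r : ℝ) (hr : r < 3 / 2)
    (w : ℝ → ℝ) (hw : SolvesLinODE w r) :
    (∀ y : ℝ, 0 < y → 0 < w y) ∧
    Filter.Tendsto (fun y => deriv w y / w y) Filter.atTop (nhds 0) ∧
    ∃ C : ℝ, 0 < C ∧
      Filter.Tendsto (fun y => w y / y ^ (1 - 2 * r)) Filter.atTop (nhds C) := by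
  set k := 1 - 2 * r with hkdef
  have hk : -2 < k := by rw [hkdef]; linarith
  have h : ODEk w k := by
    refine ⟨fun y => (hw.1 y).1, fun y => (hw.1 y).2, fun y hy => ?_⟩
    have e := hw.2.1 y hy
    rw [hkdef]
    linarith
  have h0 : w 0 = 0 := hw.2.2.1
  have h1 : deriv w 0 = 1 := hw.2.2.2
  have hwpos := w_pos h hk h0 h1
  obtain ⟨C, hC0, htend, M, hM, Z0, hZ01, hMb⟩ := H_conv h hwpos
  obtain ⟨δ, hδ, Zl, hZl1, hlb⟩ := w_lower h hk h0 hwpos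
  -- C > 0
  have hCpos : 0 < C := by
    rcases lt_or_eq_of_le hC0 with hlt | heq
    · exact hlt
    · exfalso
      have hlim0 : Tendsto (Hf w k) atTop (𝓝 0) := by rwa [← heq] at htend
      obtain ⟨n, hn⟩ := exists_nat_gt ((k+2)/2)
      obtain ⟨c, hc, Zc, hZc1, hcb⟩ := H_decay h hwpos hlim0 hM hZ01 hMb n
      have hlimr : Tendsto (fun y : ℝ => c * y ^ (-(2*(n:ℝ)-2-k))) atTop (𝓝 0) := by
        have h2 : (0:ℝ) < 2*(n:ℝ)-2-k := by
          have : (k+2)/2 < (n:ℝ) := hn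
          linarith
        have := (tendsto_rpow_neg_atTop h2).const_mul c
        rwa [mul_zero] at this
      have hev : ∀ᶠ y in atTop, c * y ^ (-(2*(n:ℝ)-2-k)) < δ :=
        hlimr.eventually (eventually_lt_nhds hδ)
      obtain ⟨y, ⟨⟨⟨hyZl, hyZc⟩, hyone⟩, hylt⟩⟩ :=
        ((((eventually_ge_atTop Zl).and (eventually_ge_atTop Zc)).and
          (eventually_ge_atTop 1)).and hev).exists
      have hy0 : (0:ℝ) < y := by linarith
      have hHlb : δ * y ^ (-2-k) ≤ Hf w k y := by
        have hwl := hlb y hyZl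
        have heq2 : δ * y ^ (-2-k) = (δ * y ^ (-(2:ℝ))) / y ^ k := by
          rw [div_eq_mul_inv, ← Real.rpow_neg hy0.le, mul_assoc, rp_mul hy0]
          ring_nf
        rw [heq2, Hf]
        exact div_le_div_of_nonneg_right hwl (Real.rpow_pos_of_pos hy0 k).le
      have hHub := hcb y hyZc
      have hcomb : δ * y ^ (-2-k) ≤ c * y ^ (-(2*(n:ℝ))) := le_trans hHlb hHub
      have hmul := mul_le_mul_of_nonneg_right hcomb (Real.rpow_pos_of_pos hy0 (2+k)).le
      have eL : δ * y ^ (-2-k) * y ^ (2+k) = δ := by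
        rw [mul_assoc, rp_mul hy0, show (-2-k) + (2+k) = 0 by ring, Real.rpow_zero, mul_one]
      have eR : c * y ^ (-(2*(n:ℝ))) * y ^ (2+k) = c * y ^ (-(2*(n:ℝ)-2-k)) := by
        rw [mul_assoc, rp_mul hy0, show -(2*(n:ℝ)) + (2+k) = -(2*(n:ℝ)-2-k) by ring]
      rw [eL, eR] at hmul
      linarith
  refine ⟨hwpos, ?_, ⟨C, hCpos, htend⟩⟩
  -- w'/w → 0
  have hMb' : ∀ y, Z0 ≤ y → Hf w k y ≤ M * y ^ (-(0:ℝ)) := by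
    intro y hy
    rw [neg_zero, Real.rpow_zero, mul_one]
    exact hMb y hy
  obtain ⟨A, hA0, T, hT, hDHb⟩ := DH_bound (m := (0:ℝ)) h hwpos hM.le hZ01 hMb'
  have hT1 : (1:ℝ) ≤ T := le_trans hZ01 hT
  have hDH0 : Tendsto (DHf w k) atTop (𝓝 0) := by
    apply squeeze_zero_norm' (a := fun y => A * (Real.exp (-(y^2)/4) * y ^ (-(2*k)))
      + (4*|k*(1-k)| * M) * y ^ (-3-(0:ℝ)))
    · filter_upwards [eventually_ge_atTop T] with y hy
      rw [Real.norm_eq_abs]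
      exact hDHb y hy
    · have t1 : Tendsto (fun y : ℝ => A * (Real.exp (-(y^2)/4) * y ^ (-(2*k)))) atTop (𝓝 (A * 0)) :=
        (tendsto_exp_neg_rpow _).const_mul A
      have t2 : Tendsto (fun y : ℝ => (4*|k*(1-k)| * M) * y ^ (-3-(0:ℝ))) atTop
          (𝓝 ((4*|k*(1-k)| * M) * 0)) := by
        apply Tendsto.const_mul
        rw [show (-3-(0:ℝ)) = -(3:ℝ) by norm_num]
        exact tendsto_rpow_neg_atTop (by norm_num)
      have := t1.add t2
      simpa using this
  have hHne : C ≠ 0 := ne_of_gt hCpos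
  have hdiv : Tendsto (fun y => DHf w k y / Hf w k y) atTop (𝓝 0) := by
    have := hDH0.div htend hHne
    rwa [zero_div] at this
  have hinv : Tendsto (fun y : ℝ => k * y⁻¹) atTop (𝓝 (k * 0)) :=
    tendsto_inv_atTop_zero.const_mul k
  have hsum : Tendsto (fun y => k * y⁻¹ + DHf w k y / Hf w k y) atTop (𝓝 0) := by
    have := hinv.add hdiv
    simpa using this
  apply hsum.congr'
  filter_upwards [eventually_gt_atTop (0:ℝ)] with y hy0
  have hw0 : w y ≠ 0 := ne_of_gt (hwpos y hy0)
  have hH0 : Hf w k y ≠ 0 := by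
    have := hwpos y hy0
    have := Real.rpow_pos_of_pos hy0 k
    rw [Hf]
    positivity
  rw [DHf_identity hy0 hw0, mul_div_assoc, div_self hH0, mul_one]
  ring
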